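/- If Q is a polynomial of degree n such that x Q''(x) + (1+α−x) Q'(x) = −n P(x) for a polynomial P, then ∫₀^∞ P(x) x^α e^{−x} dx = 0. -/

import Mathlib

open Polynomial Real MeasureTheory Filter Topology Set

lemma integrableOn_poly_rpow_exp (α : ℝ) (hα : -1 < α) (p : Polynomial ℝ) :
    IntegrableOn (fun x : ℝ => p.eval x * x ^ α * Real.exp (-x)) (Set.Ioi 0) := by
  induction p using Polynomial.induction_on' with
  | add p q hp hq =>
      exact IntegrableOn.congr_fun (hp.add hq) (fun x hx => by simp [add_mul]) measurableSet_Ioi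
  | monomial k c =>
      have h : (0:ℝ) < (k : ℝ) + α + 1 := by
        have : (0:ℝ) ≤ (k:ℝ) := Nat.cast_nonneg k
        linarith
      have := (Real.GammaIntegral_convergent h).smul c
      refine IntegrableOn.congr_fun this ?_ measurableSet_Ioi
      intro x hx
      have hx' : (0:ℝ) < x := hx
      simp only [Pi.smul_apply, smul_eq_mul, eval_monomial]
      rw [show (k:ℝ) + α + 1 - 1 = (k:ℝ) + α by ring, Real.rpow_add hx',
        Real.rpow_natCast]
      ring

/-- if `Q` is a polynomial of degree `n` with
`x Q'' + (1+α−x) Q' = −n P`, then `∫₀^∞ P(x) x^α e^{−x} dx = 0`. -/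
theorem laguerre_orthogonality_necessary (α : ℝ) (hα : -1 < α) (n : ℕ) (hn : 1 ≤ n)
    (P Q : Polynomial ℝ) (hQdeg : Q.natDegree = n)
    (hode : X * derivative (derivative Q) + (C (1 + α) - X) * derivative Q
        = (-(n : ℝ)) • P) :
    ∫ x in Set.Ioi (0 : ℝ), P.eval x * x ^ α * Real.exp (-x) = 0 := by
  set D1 := derivative Q with hD1
  set D2 := derivative D1 with hD2
  set F : ℝ → ℝ := fun x => x ^ (α + 1) * Real.exp (-x) * D1.eval x with hF
  set g : ℝ → ℝ := fun x => (-(n : ℝ)) * (P.eval x * x ^ α * Real.exp (-x)) with hg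
  have hα1 : (0:ℝ) < α + 1 := by linarith
  -- pointwise ODE
  have hode' : ∀ x : ℝ, x * D2.eval x + (1 + α - x) * D1.eval x = (-(n:ℝ)) * P.eval x := by
    intro x
    have := congrArg (fun p => Polynomial.eval x p) hode
    simpa [smul_eq_mul] using this
  -- derivative of F
  have hderiv : ∀ x ∈ Set.Ioi (0:ℝ), HasDerivAt F (g x) x := by
    intro x hx
    have hx' : (0:ℝ) < x := hx
    have h1 : HasDerivAt (fun x : ℝ => x ^ (α + 1)) ((α + 1) * x ^ (α + 1 - 1)) x :=
      Real.hasDerivAt_rpow_const (Or.inl hx'.ne')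
    have h2 : HasDerivAt (fun x : ℝ => Real.exp (-x)) (Real.exp (-x) * (-1)) x :=
      (hasDerivAt_neg x).exp
    have h3 : HasDerivAt (fun x : ℝ => D1.eval x) (D2.eval x) x := D1.hasDerivAt x
    have h := (h1.mul h2).mul h3
    refine h.congr_deriv ?_
    symm
    have e1 : x ^ (α + 1 - 1) = x ^ α := by norm_num
    have e2 : x ^ (α + 1) = x ^ α * x := by
      rw [Real.rpow_add hx', Real.rpow_one]
    rw [hg]
    simp only [Pi.mul_apply, e1, e2]
    linear_combination (-(x ^ α * Real.exp (-x))) * (hode' x)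
  -- F tends to 0 at 0 and at infinity, value at 0 is 0
  have hF0 : F 0 = 0 := by
    simp [hF, Real.zero_rpow hα1.ne']
  have hcont : ContinuousWithinAt F (Set.Ici 0) 0 := by
    apply ContinuousAt.continuousWithinAt
    have : ContinuousAt (fun x : ℝ => x ^ (α + 1)) 0 :=
      Real.continuousAt_rpow_const 0 (α + 1) (Or.inr hα1.le)
    exact (this.mul ((Real.continuous_exp.comp continuous_neg).continuousAt)).mul
      (D1.continuousAt)
  have htop : Tendsto F atTop (𝓝 0) := by
    have h1 : Tendsto (fun x : ℝ => x ^ (α + 1) * Real.exp (-(1/2) * x)) atTop (𝓝 0) :=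
      tendsto_rpow_mul_exp_neg_mul_atTop_nhds_zero (α + 1) (1/2) (by norm_num)
    have h2 : Tendsto (fun x : ℝ => (D1.comp (C 2 * X)).eval x / Real.exp x) atTop (𝓝 0) :=
      (D1.comp (C 2 * X)).tendsto_div_exp_atTop
    have h3 : Tendsto (fun x : ℝ => x / 2) atTop atTop :=
      tendsto_id.atTop_div_const (by norm_num)
    have h4 : Tendsto (fun x : ℝ => D1.eval x / Real.exp (x / 2)) atTop (𝓝 0) := by
      have := h2.comp h3
      refine this.congr fun x => ?_
      simp [Function.comp, eval_comp]
      ring_nf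
    have := h1.mul h4
    rw [mul_zero] at this
    refine this.congr fun x => ?_
    have : Real.exp (-x) = Real.exp (-(1/2) * x) * (Real.exp (x/2))⁻¹ := by
      rw [← Real.exp_neg, ← Real.exp_add]; ring_nf
    simp only [hF, div_eq_mul_inv, this]
    ring
  have hint : IntegrableOn g (Set.Ioi 0) :=
    IntegrableOn.congr_fun ((integrableOn_poly_rpow_exp α hα P).smul (-(n:ℝ)))
      (fun x _ => by simp [hg]) measurableSet_Ioi
  have key : ∫ x in Set.Ioi (0:ℝ), g x = 0 := by
    rw [MeasureTheory.integral_Ioi_of_hasDerivAt_of_tendsto hcont hderiv hint htop, hF0,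
      zero_sub, neg_zero]
  have : ∫ x in Set.Ioi (0:ℝ), g x
      = (-(n:ℝ)) * ∫ x in Set.Ioi (0:ℝ), P.eval x * x ^ α * Real.exp (-x) := by
    simp only [hg]
    rw [MeasureTheory.integral_const_mul]
  rw [this] at key
  have hn0 : (-(n:ℝ)) ≠ 0 := by
    simp only [ne_eq, neg_eq_zero, Nat.cast_eq_zero]
    omega
  exact (mul_eq_zero.mp key).resolve_left hn0
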